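/- Let n, d, β be natural numbers with 1 ≤ β, β ≤ n − d, and β < n. Then C(n−d,β)/C(n,β) ≥ 1 − d·β/(n−β), where C denotes the binomial coefficient and the inequality is over the real numbers. -/

import Mathlib

open scoped ENNReal

/-- Distance between two finite sets: `d(e,f) = max(|e \ f|, |f \ e|)`. -/
def setDist {γ : Type*} [DecidableEq γ] (e f : Finset γ) : ℕ :=
  max (e \ f).card (f \ e).card

/-- Probability that a sample from the PMF `μ` lands in the set `S`. -/
noncomputable def pr {γ : Type*} (μ : PMF γ) (S : Set γ) : ℝ :=
  (μ.toOuterMeasure S).toReal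

/-- `A` is an `(ε1, ε2, δ, β)_{n,d}` differentially-private solution to the
subset-retrieval problem. -/
def IsDP (n d β : ℕ) (ε1 ε2 δ : ℝ)
    (A : Finset (Fin n) → PMF (Finset (Fin n))) : Prop :=
  (∀ e : Finset (Fin n), e.card = d →
      pr (A e) {s | setDist s e ≤ β} ≥ 1 - ε1) ∧
  (∀ ei ej : Finset (Fin n), ei.card = d → ej.card = d → setDist ei ej = 1 →
      ∀ S : Set (Finset (Fin n)),
        pr (A ei) S ≤ Real.exp ε2 * pr (A ej) S + δ)

theorem stmt_19 (n d β : ℕ) (hβ1 : 1 ≤ β) (hβnd : β ≤ n - d) (hβn : β < n) :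
    ((n - d).choose β : ℝ) / (n.choose β : ℝ)
      ≥ 1 - ((d : ℝ) * (β : ℝ)) / ((n : ℝ) - (β : ℝ)) := by
  have hdn : d ≤ n := by omega
  have hβdn : β + d ≤ n := by omega
  have hnβ : (0:ℝ) < (n:ℝ) - β := by
    have : (β:ℝ) < n := by exact_mod_cast hβn
    linarith
  set x : ℝ := (d:ℝ) / ((n:ℝ) - β) with hx
  have hx0 : 0 ≤ x := div_nonneg (Nat.cast_nonneg d) hnβ.le
  have hx1 : x ≤ 1 := by
    rw [hx, div_le_one hnβ]
    have : (β:ℝ) + d ≤ n := by exact_mod_cast hβdn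
    linarith
  have hprod : (1 - x)^β * (n.descFactorial β : ℝ) ≤ ((n - d).descFactorial β : ℝ) := by
    rw [Nat.descFactorial_eq_prod_range, Nat.descFactorial_eq_prod_range,
      Nat.cast_prod, Nat.cast_prod]
    have hpc : (1-x)^β = ∏ _i ∈ Finset.range β, (1-x) := by
      rw [Finset.prod_const, Finset.card_range]
    rw [hpc, ← Finset.prod_mul_distrib]
    apply Finset.prod_le_prod
    · intro i _
      exact mul_nonneg (by linarith) (Nat.cast_nonneg _)
    · intro i hi
      have hi' : i < β := Finset.mem_range.mp hi
      have h1 : ((n - d - i : ℕ):ℝ) = (n:ℝ) - (d:ℝ) - (i:ℝ) := by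
        have hle : d + i ≤ n := by omega
        rw [Nat.sub_sub, Nat.cast_sub hle]
        push_cast; ring
      have h2 : ((n - i : ℕ):ℝ) = (n:ℝ) - i := by
        rw [Nat.cast_sub (by omega)]
      rw [h1, h2, hx, ← sub_nonneg]
      have expand : (n:ℝ) - (d:ℝ) - (i:ℝ) - (1 - (d:ℝ)/((n:ℝ)-β)) * ((n:ℝ)-(i:ℝ))
          = ((d:ℝ) * ((β:ℝ) - (i:ℝ))) / ((n:ℝ) - β) := by
        field_simp
        ring
      rw [expand]
      apply div_nonneg _ hnβ.le
      have hiβ : (i:ℝ) ≤ β := by exact_mod_cast hi'.le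
      have hd0 : (0:ℝ) ≤ d := Nat.cast_nonneg d
      nlinarith
  have hc1 : ((n - d).descFactorial β : ℝ) = (β.factorial : ℝ) * ((n - d).choose β : ℝ) := by
    exact_mod_cast Nat.descFactorial_eq_factorial_mul_choose _ _
  have hc2 : (n.descFactorial β : ℝ) = (β.factorial : ℝ) * (n.choose β : ℝ) := by
    exact_mod_cast Nat.descFactorial_eq_factorial_mul_choose _ _
  have hcpos : (0:ℝ) < (n.choose β : ℝ) := by
    exact_mod_cast Nat.choose_pos hβn.le
  have hfpos : (0:ℝ) < (β.factorial : ℝ) := by exact_mod_cast β.factorial_pos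
  have hratio : (1 - x)^β ≤ ((n - d).choose β : ℝ) / (n.choose β : ℝ) := by
    rw [le_div_iff₀ hcpos]
    rw [hc1, hc2, mul_left_comm] at hprod
    exact le_of_mul_le_mul_left hprod hfpos
  have hbern : 1 - (β:ℝ) * x ≤ (1 - x)^β := by
    have h := one_add_mul_le_pow (a := -x) (by linarith) β
    have : 1 + (β:ℝ) * (-x) = 1 - (β:ℝ) * x := by ring
    rw [this] at h
    exact h.trans_eq (by ring)
  have hxx : ((d:ℝ) * (β:ℝ)) / ((n:ℝ) - (β:ℝ)) = (β:ℝ) * x := by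
    rw [hx]; ring
  rw [ge_iff_le, hxx]
  linarith
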